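/- Let (z, w) be a unit vector with entries in Z[1/√2, i] and suppose sde(|z|², √2) ≥ 4. Then for any integer k, the value sde(|(z + wω^k)/√2|², √2) differs from sde(|z|², √2) by at most 1 in absolute value. -/

import Mathlib

noncomputable section

open Complex

/-- The eighth root of unity ω = e^{iπ/4}. -/
def omg : ℂ := Complex.exp (Real.pi * Complex.I / 4)

/-- √2 as a complex number. -/
def rt2 : ℂ := (Real.sqrt 2 : ℝ)

/-- Membership in the ring Z[ω] = {a + bω + cω² + dω³ : a,b,c,d ∈ ℤ}. -/
def Zomega (z : ℂ) : Prop :=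
  ∃ a b c d : ℤ, z = a + b * omg + c * omg ^ 2 + d * omg ^ 3

/-- Membership in the ring Z[1/√2, i] = {u/(√2)^n : u ∈ Z[ω], n ∈ ℕ}. -/
def ZRoot2i (z : ℂ) : Prop :=
  ∃ u : ℂ, Zomega u ∧ ∃ n : ℕ, z = u / rt2 ^ n

/-- `b` divides `z` within the ring Z[ω]. -/
def ZDvd (b z : ℂ) : Prop := ∃ q : ℂ, Zomega q ∧ z = b * q

/-- `k` is the greatest dividing exponent of base `b` with respect to `z`:
`b^k` divides `z` in Z[ω], while `b^(k+1)` does not. -/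
def IsGde (b z : ℂ) (k : ℕ) : Prop := ZDvd (b ^ k) z ∧ ¬ ZDvd (b ^ (k + 1)) z

/-- `k` is the smallest denominator exponent of base √2 with respect to `z`:
the smallest integer `k` such that `z·(√2)^k ∈ Z[ω]`. -/
def IsSde (z : ℂ) (k : ℤ) : Prop :=
  Zomega (z * rt2 ^ k) ∧ ∀ j : ℤ, Zomega (z * rt2 ^ j) → k ≤ j


















lemma rt2_sq : rt2 ^ 2 = 2 := by
  rw [rt2, ← Complex.ofReal_pow, Real.sq_sqrt (by norm_num : (2:ℝ) ≥ 0)]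
  norm_num

lemma rt2_ne : rt2 ≠ 0 := by
  rw [rt2]
  simp [Real.sqrt_eq_zero']

lemma omg_eq : omg = (Real.sqrt 2 : ℝ) / 2 + ((Real.sqrt 2 : ℝ) / 2 : ℂ) * I := by
  rw [omg]
  have : (Real.pi : ℂ) * I / 4 = ((Real.pi/4 : ℝ) : ℂ) * I := by push_cast; ring
  rw [this, Complex.exp_mul_I, ← Complex.ofReal_cos, ← Complex.ofReal_sin,
    Real.cos_pi_div_four, Real.sin_pi_div_four]
  push_cast
  ring

lemma omg_sq : omg ^ 2 = I := by
  rw [omg_eq]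
  have h2 : ((Real.sqrt 2 : ℝ) : ℂ) ^ 2 = 2 := rt2_sq
  set r : ℂ := ((Real.sqrt 2 : ℝ) : ℂ) with hr
  linear_combination ((1+2*I+I^2)/4) * h2 + (1/2) * Complex.I_sq

lemma omg_pow4 : omg ^ 4 = -1 := by
  calc omg ^ 4 = (omg^2)^2 := by ring
  _ = -1 := by rw [omg_sq]; exact Complex.I_sq

lemma omg_pow8 : omg ^ 8 = 1 := by
  calc omg ^ 8 = (omg^4)^2 := by ring
  _ = 1 := by rw [omg_pow4]; ring

lemma omg_ne : omg ≠ 0 := Complex.exp_ne_zero _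

lemma rt2_eq_omg : rt2 = omg - omg ^ 3 := by
  rw [omg_eq, rt2]
  set r : ℂ := ((Real.sqrt 2 : ℝ) : ℂ) with hr
  have h2 : r ^ 2 = 2 := rt2_sq
  linear_combination (-(r/4)*(1-I)) * h2 + (3*r^3/8 + r^3/8*I) * Complex.I_sq

lemma conj_omg : (starRingEnd ℂ) omg = -omg ^ 3 := by
  rw [omg_eq]
  simp only [map_add, map_mul, map_div₀, map_ofNat, Complex.conj_ofReal, Complex.conj_I]
  set r : ℂ := ((Real.sqrt 2 : ℝ) : ℂ) with hr
  have h2 : r ^ 2 = 2 := rt2_sq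
  linear_combination (-(r/4)*(1-I)) * h2 + (3*r^3/8 + r^3/8*I) * Complex.I_sq

abbrev Z4 := ℤ × ℤ × ℤ × ℤ
def phi (u : Z4) : ℂ := (u.1 : ℂ) + u.2.1 * omg + u.2.2.1 * omg^2 + u.2.2.2 * omg^3
def zmul (u v : Z4) : Z4 :=
  (u.1*v.1 - u.2.1*v.2.2.2 - u.2.2.1*v.2.2.1 - u.2.2.2*v.2.1,
   u.1*v.2.1 + u.2.1*v.1 - u.2.2.1*v.2.2.2 - u.2.2.2*v.2.2.1,
   u.1*v.2.2.1 + u.2.1*v.2.1 + u.2.2.1*v.1 - u.2.2.2*v.2.2.2,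
   u.1*v.2.2.2 + u.2.1*v.2.2.1 + u.2.2.1*v.2.1 + u.2.2.2*v.1)
def zconj (u : Z4) : Z4 := (u.1, -u.2.2.2, -u.2.2.1, -u.2.1)

lemma phi_add (u v : Z4) : phi (u + v) = phi u + phi v := by
  simp only [phi, Prod.fst_add, Prod.snd_add]
  push_cast
  ring

lemma phi_neg (u : Z4) : phi (-u) = - phi u := by
  simp only [phi, Prod.fst_neg, Prod.snd_neg]
  push_cast
  ring

lemma phi_mul (u v : Z4) : phi (zmul u v) = phi u * phi v := by
  simp only [phi, zmul]
  push_cast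
  linear_combination -(((u.2.1:ℂ)*(v.2.2.2:ℂ) + (u.2.2.1:ℂ)*(v.2.2.1:ℂ) + (u.2.2.2:ℂ)*(v.2.1:ℂ))
    + ((u.2.2.1:ℂ)*(v.2.2.2:ℂ) + (u.2.2.2:ℂ)*(v.2.2.1:ℂ)) * omg
    + ((u.2.2.2:ℂ)*(v.2.2.2:ℂ)) * omg^2) * omg_pow4

lemma phi_conj (u : Z4) : (starRingEnd ℂ) (phi u) = phi (zconj u) := by
  simp only [phi, zconj, map_add, map_mul, map_pow, map_intCast, conj_omg]
  push_cast
  linear_combination ((u.2.2.1 : ℂ) * omg^2) * omg_pow4 + (-(u.2.2.2:ℂ) * omg) * omg_pow8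

lemma phi_zero : phi 0 = 0 := by simp [phi]
lemma phi_one : phi (1,0,0,0) = 1 := by simp [phi]
lemma phi_rt2 : phi (0,1,0,-1) = rt2 := by
  rw [rt2_eq_omg]
  simp only [phi]
  push_cast
  try ring

lemma phi_repr (u : Z4) : phi u =
    ((u.1 + (u.2.1 - u.2.2.2) * (Real.sqrt 2/2) : ℝ) : ℂ)
    + ((u.2.2.1 + (u.2.1 + u.2.2.2) * (Real.sqrt 2/2) : ℝ) : ℂ) * I := by
  have h3 : omg ^ 3 = I * omg := by rw [pow_succ, omg_sq]
  rw [phi, h3, omg_sq, omg_eq]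
  push_cast
  linear_combination ((u.2.2.2 : ℂ) * (Real.sqrt 2:ℝ) / 2) * Complex.I_sq

lemma int_half_sqrt2 (a m : ℤ) (h : (a:ℝ) + m * (Real.sqrt 2/2) = 0) : a = 0 ∧ m = 0 := by
  rcases eq_or_ne m 0 with hm | hm
  · subst hm; norm_num at h; exact ⟨by exact_mod_cast h, rfl⟩
  · exfalso
    apply irrational_sqrt_two
    refine ⟨(-2*a/m : ℚ), ?_⟩
    push_cast
    have hm' : (m:ℝ) ≠ 0 := Int.cast_ne_zero.mpr hm
    field_simp
    linarith [h]

lemma phi_inj0 (u : Z4) (h : phi u = 0) : u = 0 := by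
  rw [phi_repr] at h
  rw [Complex.ext_iff] at h
  simp only [Complex.add_re, Complex.add_im, Complex.ofReal_re, Complex.ofReal_im,
    Complex.mul_re, Complex.mul_im, Complex.I_re, Complex.I_im, Complex.zero_re,
    Complex.zero_im] at h
  obtain ⟨h1, h2⟩ := h
  have e1 := int_half_sqrt2 u.1 (u.2.1 - u.2.2.2) (by push_cast; linarith [h1])
  have e2 := int_half_sqrt2 u.2.2.1 (u.2.1 + u.2.2.2) (by push_cast; linarith [h2])
  have : u.1 = 0 ∧ u.2.1 = 0 ∧ u.2.2.1 = 0 ∧ u.2.2.2 = 0 := by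
    constructor; exact e1.1; constructor; omega; constructor; exact e2.1; omega
  obtain ⟨a,b,c,d⟩ := this
  ext <;> simp_all

lemma phi_inj {u v : Z4} (h : phi u = phi v) : u = v := by
  have : phi (u + -v) = 0 := by rw [phi_add, phi_neg, h]; ring
  have h0 := phi_inj0 _ this
  have : u - v = 0 := by rwa [sub_eq_add_neg]
  exact sub_eq_zero.mp this

abbrev F4 := (ZMod 2) × (ZMod 2) × (ZMod 2) × (ZMod 2)
def m2 (u : Z4) : F4 := ((u.1 : ZMod 2), (u.2.1 : ZMod 2), (u.2.2.1 : ZMod 2), (u.2.2.2 : ZMod 2))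
def fmul (x y : F4) : F4 :=
  (x.1*y.1 - x.2.1*y.2.2.2 - x.2.2.1*y.2.2.1 - x.2.2.2*y.2.1,
   x.1*y.2.1 + x.2.1*y.1 - x.2.2.1*y.2.2.2 - x.2.2.2*y.2.2.1,
   x.1*y.2.2.1 + x.2.1*y.2.1 + x.2.2.1*y.1 - x.2.2.2*y.2.2.2,
   x.1*y.2.2.2 + x.2.1*y.2.2.1 + x.2.2.1*y.2.1 + x.2.2.2*y.1)
def fsd (x : F4) : Prop := x.1 = x.2.2.1 ∧ x.2.1 = x.2.2.2
def fsum (x : F4) : ZMod 2 := x.1 + x.2.1 + x.2.2.1 + x.2.2.2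

instance : DecidablePred fsd := fun x => instDecidableAnd

def Sdvd (u : Z4) : Prop := (2 ∣ u.1 - u.2.2.1) ∧ (2 ∣ u.2.1 - u.2.2.2)
def OddSum (u : Z4) : Prop := Odd (u.1 + u.2.1 + u.2.2.1 + u.2.2.2)

lemma m2_mul (u v : Z4) : m2 (zmul u v) = fmul (m2 u) (m2 v) := by
  simp only [m2, zmul, fmul, Prod.mk.injEq]
  refine ⟨?_, ?_, ?_, ?_⟩ <;> push_cast <;> ring

lemma dvd2_iff (x y : ℤ) : (2 ∣ x - y) ↔ ((x : ZMod 2) = (y : ZMod 2)) := by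
  rw [← sub_eq_zero (a := (x : ZMod 2))]
  rw [← Int.cast_sub, ZMod.intCast_zmod_eq_zero_iff_dvd]
  norm_num

lemma Sdvd_iff (u : Z4) : Sdvd u ↔ fsd (m2 u) := by
  simp [Sdvd, fsd, m2, dvd2_iff]

lemma intcast_one_iff (x : ℤ) : ((x : ZMod 2) = 1) ↔ ¬ (2 ∣ x) := by
  rw [show ((2:ℤ) ∣ x) ↔ ((x : ZMod 2) = 0) from (ZMod.intCast_zmod_eq_zero_iff_dvd x 2).symm]
  generalize (x : ZMod 2) = a
  revert a; decide

lemma OddSum_iff (u : Z4) : OddSum u ↔ fsum (m2 u) = 1 := by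
  rw [OddSum, ← Int.not_even_iff_odd, even_iff_two_dvd]
  rw [show fsum (m2 u) = ((u.1 + u.2.1 + u.2.2.1 + u.2.2.2 : ℤ) : ZMod 2) by
    simp [fsum, m2]; try push_cast; try ring]
  exact (intcast_one_iff _).symm

lemma Dmul_sum : ∀ x y : F4, fsum (fmul x y) = fsum x * fsum y := by decide
lemma D2 : ∀ x y : F4, fsum x = 0 → ¬fsd x → fsum y = 0 → ¬fsd y →
    (fsd (fmul x y) ∧ (fmul x y).2.2.1 + (fmul x y).2.2.2 = 1) := by decide
lemma D3 : ∀ x y : F4, fsum x = 1 → fsum y = 0 → ¬fsd y → ¬ fsd (fmul x y) := by decide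


def rt2c : Z4 := (0,1,0,-1)

lemma zmul_rt2c (v : Z4) : zmul rt2c v =
    (v.2.1 - v.2.2.2, v.1 + v.2.2.1, v.2.1 + v.2.2.2, v.2.2.1 - v.1) := by
  simp [zmul, rt2c]; omega

lemma Sdvd_zmul_rt2c (v : Z4) : Sdvd (zmul rt2c v) := by
  rw [zmul_rt2c]; constructor <;> simp <;> omega

lemma notodd_zmul_rt2c (v : Z4) : ¬ OddSum (zmul rt2c v) := by
  rw [zmul_rt2c, OddSum, Int.odd_iff]; simp; omega

lemma odd_not_sdvd {u : Z4} (h : OddSum u) : ¬ Sdvd u := by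
  rw [OddSum, Int.odd_iff] at h
  rintro ⟨h1, h2⟩; omega

lemma Sdvd_elim {u : Z4} (h : Sdvd u) :
    ∃ w : Z4, u = zmul rt2c w ∧ (OddSum w ↔ Odd (u.2.2.1 + u.2.2.2)) := by
  obtain ⟨⟨s, hs⟩, ⟨e, he⟩⟩ := h
  refine ⟨(e, u.2.2.1 + s, u.2.2.2 + e, -s), ?_, ?_⟩
  · rw [zmul_rt2c]
    ext <;> simp <;> omega
  · rw [OddSum, Int.odd_iff, Int.odd_iff]; simp; omega

lemma phi_rt2c : phi rt2c = rt2 := phi_rt2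

lemma phi_zmul_rt2c (v : Z4) : phi (zmul rt2c v) = rt2 * phi v := by
  rw [phi_mul, phi_rt2c]

def zpowc (e : ℕ) (v : Z4) : Z4 := (zmul rt2c)^[e] v

lemma phi_zpowc (e : ℕ) (v : Z4) : phi (zpowc e v) = rt2 ^ e * phi v := by
  induction e with
  | zero => simp [zpowc]
  | succ e ih =>
      rw [zpowc, Function.iterate_succ_apply', ← zpowc, phi_zmul_rt2c, ih]
      ring

def Base (u : Z4) (δ : ℤ) : Prop :=
  (OddSum u ∧ δ = 0) ∨ (¬ OddSum u ∧ ¬ Sdvd u ∧ δ = 1)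

lemma Base_not_sdvd {u : Z4} {δ : ℤ} (h : Base u δ) : ¬ Sdvd u := by
  rcases h with ⟨h1, _⟩ | ⟨_, h2, _⟩
  · exact odd_not_sdvd h1
  · exact h2

lemma Base_delta {u : Z4} {δ δ' : ℤ} (h : Base u δ) (h' : Base u δ') : δ = δ' := by
  rcases h with ⟨h1, e⟩ | ⟨h1, _, e⟩ <;> rcases h' with ⟨h2, e'⟩ | ⟨h2, _, e'⟩ <;>
    first | (exact e.trans e'.symm) | (exact absurd h1 h2) | (exact absurd h2 h1)

lemma Base_delta_range {u : Z4} {δ : ℤ} (h : Base u δ) : δ = 0 ∨ δ = 1 := by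
  rcases h with ⟨_, e⟩ | ⟨_, _, e⟩ <;> omega

lemma Base_ne_zero {u : Z4} {δ : ℤ} (h : Base u δ) : u ≠ 0 := by
  intro h0
  apply Base_not_sdvd h
  subst h0
  exact ⟨⟨0, by simp⟩, ⟨0, by simp⟩⟩

lemma base_denom {u q : Z4} {δ : ℤ} (hB : Base u δ) (e : ℕ)
    (h : phi u = phi q * rt2 ^ e) : e = 0 ∧ u = q := by
  cases e with
  | zero => exact ⟨rfl, phi_inj (by simpa using h)⟩
  | succ e =>
      exfalso
      apply Base_not_sdvd hB
      have : phi u = phi (zmul rt2c (zpowc e q)) := by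
        rw [phi_zmul_rt2c, phi_zpowc, h, pow_succ]
        ring
      rw [phi_inj this]
      exact Sdvd_zmul_rt2c _

def IsVal (x : ℂ) (m : ℤ) : Prop :=
  ∃ (u : Z4) (j δ : ℤ), Base u δ ∧ x = phi u * rt2 ^ j ∧ m = 2*j + δ

lemma rt2_zpow_ne (j : ℤ) : rt2 ^ j ≠ 0 := zpow_ne_zero j rt2_ne

lemma val_aux {u v : Z4} {j j' δ δ' : ℤ} (hB : Base u δ) (hB' : Base v δ')
    (hle : j ≤ j') (h : phi u * rt2 ^ j = phi v * rt2 ^ j') : j = j' ∧ u = v := by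
  have he : phi u = phi v * rt2 ^ ((j' - j).toNat) := by
    have h1 : phi u = phi v * rt2 ^ (j' - j) := by
      rw [zpow_sub₀ rt2_ne, mul_div_assoc', eq_div_iff (rt2_zpow_ne j)]
      linear_combination h
    rwa [show (j' - j) = ((j' - j).toNat : ℤ) from (Int.toNat_of_nonneg (by omega)).symm,
      zpow_natCast] at h1
  obtain ⟨h0, huv⟩ := base_denom hB _ he
  exact ⟨by omega, huv⟩

lemma val_unique {x : ℂ} {m m' : ℤ} (h : IsVal x m) (h' : IsVal x m') : m = m' := by
  obtain ⟨u, j, δ, hB, hx, hm⟩ := h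
  obtain ⟨v, j', δ', hB', hx', hm'⟩ := h'
  have heq : phi u * rt2 ^ j = phi v * rt2 ^ j' := by rw [← hx, ← hx']
  rcases le_total j j' with hle | hle
  · obtain ⟨hj, huv⟩ := val_aux hB hB' hle heq
    subst huv
    have := Base_delta hB hB'
    omega
  · obtain ⟨hj, huv⟩ := val_aux hB' hB hle heq.symm
    subst huv
    have := Base_delta hB hB'
    omega

lemma IsVal_ne_zero {x : ℂ} {m : ℤ} (h : IsVal x m) : x ≠ 0 := by
  obtain ⟨u, j, δ, hB, hx, hm⟩ := h
  rw [hx]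
  apply mul_ne_zero _ (rt2_zpow_ne j)
  intro h0
  exact Base_ne_zero hB (phi_inj0 u h0)
lemma IsVal_phi {u : Z4} (h : OddSum u) : IsVal (phi u) 0 :=
  ⟨u, 0, 0, Or.inl ⟨h, rfl⟩, by simp, by ring⟩

lemma IsVal_mul_rt2z {x : ℂ} {m : ℤ} (K : ℤ) (h : IsVal x m) :
    IsVal (x * rt2 ^ K) (m + 2*K) := by
  obtain ⟨u, j, δ, hB, hx, hm⟩ := h
  exact ⟨u, j + K, δ, hB, by rw [hx, zpow_add₀ rt2_ne]; ring, by omega⟩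

lemma IsVal_one : IsVal 1 0 := by
  have : OddSum ((1:ℤ),(0:ℤ),(0:ℤ),(0:ℤ)) := by rw [OddSum]; norm_num
  have h := IsVal_phi this
  rwa [phi_one] at h

lemma IsVal_two : IsVal 2 4 := by
  have h := IsVal_mul_rt2z 2 IsVal_one
  have : rt2 ^ (2:ℤ) = 2 := by
    rw [show (2:ℤ) = ((2:ℕ):ℤ) from rfl, zpow_natCast, rt2_sq]
  rw [this, one_mul] at h
  exact h

lemma notodd_iff (u : Z4) : ¬ OddSum u ↔ fsum (m2 u) = 1 → False := by
  rw [OddSum_iff]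

lemma fsum_cases (x : F4) : fsum x = 0 ∨ fsum x = 1 := by
  generalize fsum x = a; revert a; decide

lemma IsVal_mul {x y : ℂ} {m m' : ℤ} (h : IsVal x m) (h' : IsVal y m') :
    IsVal (x * y) (m + m') := by
  obtain ⟨u, j, δ, hB, hx, hm⟩ := h
  obtain ⟨v, j', δ', hB', hy, hm'⟩ := h'
  have hxy : x * y = phi (zmul u v) * rt2 ^ (j + j') := by
    rw [hx, hy, phi_mul, zpow_add₀ rt2_ne]; ring
  rcases hB with ⟨h1, e1⟩ | ⟨h1, hs1, e1⟩ <;> rcases hB' with ⟨h2, e2⟩ | ⟨h2, hs2, e2⟩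
  · -- odd * odd
    refine ⟨zmul u v, j + j', 0, Or.inl ⟨?_, rfl⟩, hxy, by omega⟩
    rw [OddSum_iff, m2_mul, Dmul_sum, (OddSum_iff u).mp h1, (OddSum_iff v).mp h2]
    norm_num
  · -- odd * (even, ¬sdvd)
    have f1 : fsum (m2 u) = 1 := (OddSum_iff u).mp h1
    have f2 : fsum (m2 v) = 0 := by
      rcases fsum_cases (m2 v) with h | h
      · exact h
      · exact absurd ((OddSum_iff v).mpr h) h2
    refine ⟨zmul u v, j + j', 1, Or.inr ⟨?_, ?_, rfl⟩, hxy, by omega⟩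
    · rw [OddSum_iff, m2_mul, Dmul_sum, f1, f2]; norm_num
    · rw [Sdvd_iff, m2_mul]
      exact D3 _ _ f1 f2 (fun hh => hs2 ((Sdvd_iff v).mpr hh))
  · -- (even,¬sdvd) * odd : use commutativity
    have f1 : fsum (m2 u) = 0 := by
      rcases fsum_cases (m2 u) with h | h
      · exact h
      · exact absurd ((OddSum_iff u).mpr h) h1
    have f2 : fsum (m2 v) = 1 := (OddSum_iff v).mp h2
    have hcomm : zmul u v = zmul v u := phi_inj (by rw [phi_mul, phi_mul]; ring)
    refine ⟨zmul u v, j + j', 1, Or.inr ⟨?_, ?_, rfl⟩, hxy, by omega⟩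
    · rw [OddSum_iff, m2_mul, Dmul_sum, f1, f2]; norm_num
    · rw [hcomm, Sdvd_iff, m2_mul]
      exact D3 _ _ f2 f1 (fun hh => hs1 ((Sdvd_iff u).mpr hh))
  · -- both (even, ¬sdvd)
    have f1 : fsum (m2 u) = 0 := by
      rcases fsum_cases (m2 u) with h | h
      · exact h
      · exact absurd ((OddSum_iff u).mpr h) h1
    have f2 : fsum (m2 v) = 0 := by
      rcases fsum_cases (m2 v) with h | h
      · exact h
      · exact absurd ((OddSum_iff v).mpr h) h2
    have hd2 := D2 (m2 u) (m2 v) f1 (fun hh => hs1 ((Sdvd_iff u).mpr hh)) f2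
      (fun hh => hs2 ((Sdvd_iff v).mpr hh))
    have hsd : Sdvd (zmul u v) := by rw [Sdvd_iff, m2_mul]; exact hd2.1
    obtain ⟨w, hw, hwodd⟩ := Sdvd_elim hsd
    have hodd : OddSum w := by
      rw [hwodd, Int.odd_iff]
      have hC : ((zmul u v).2.2.1 : ZMod 2) = (fmul (m2 u) (m2 v)).2.2.1 := by
        rw [← m2_mul]; rfl
      have hD : ((zmul u v).2.2.2 : ZMod 2) = (fmul (m2 u) (m2 v)).2.2.2 := by
        rw [← m2_mul]; rfl
      have hone : (((zmul u v).2.2.1 + (zmul u v).2.2.2 : ℤ) : ZMod 2) = 1 := by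
        push_cast
        rw [hC, hD]
        exact hd2.2
      rw [intcast_one_iff] at hone
      omega
    refine ⟨w, j + j' + 1, 0, Or.inl ⟨hodd, rfl⟩, ?_, by omega⟩
    rw [hxy, hw, phi_zmul_rt2c, zpow_add_one₀ rt2_ne, zpow_add₀ rt2_ne]
    ring
lemma OddSum_neg (u : Z4) : OddSum (-u) ↔ OddSum u := by
  rw [OddSum, OddSum, Int.odd_iff, Int.odd_iff]
  simp
  omega

lemma Sdvd_neg (u : Z4) : Sdvd (-u) ↔ Sdvd u := by
  rw [Sdvd, Sdvd]
  simp
  constructor <;> rintro ⟨h1, h2⟩ <;> constructor <;> omega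

lemma IsVal_neg {x : ℂ} {m : ℤ} (h : IsVal x m) : IsVal (-x) m := by
  obtain ⟨u, j, δ, hB, hx, hm⟩ := h
  refine ⟨-u, j, δ, ?_, by rw [hx, phi_neg]; ring, hm⟩
  rcases hB with ⟨h1, e⟩ | ⟨h1, h2, e⟩
  · exact Or.inl ⟨(OddSum_neg u).mpr h1, e⟩
  · exact Or.inr ⟨fun hh => h1 ((OddSum_neg u).mp hh), fun hh => h2 ((Sdvd_neg u).mp hh), e⟩

lemma OddSum_zconj (u : Z4) : OddSum (zconj u) ↔ OddSum u := by
  rw [OddSum, OddSum, Int.odd_iff, Int.odd_iff, zconj]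
  simp
  omega

lemma Sdvd_zconj (u : Z4) : Sdvd (zconj u) ↔ Sdvd u := by
  rw [Sdvd, Sdvd, zconj]
  simp
  constructor <;> rintro ⟨h1, h2⟩ <;> constructor <;> omega

lemma conj_rt2 : (starRingEnd ℂ) rt2 = rt2 := by
  rw [rt2, Complex.conj_ofReal]

lemma conj_rt2_zpow (j : ℤ) : (starRingEnd ℂ) (rt2 ^ j) = rt2 ^ j := by
  rw [map_zpow₀, conj_rt2]

lemma IsVal_conj {x : ℂ} {m : ℤ} (h : IsVal x m) : IsVal ((starRingEnd ℂ) x) m := by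
  obtain ⟨u, j, δ, hB, hx, hm⟩ := h
  refine ⟨zconj u, j, δ, ?_, ?_, hm⟩
  · rcases hB with ⟨h1, e⟩ | ⟨h1, h2, e⟩
    · exact Or.inl ⟨(OddSum_zconj u).mpr h1, e⟩
    · exact Or.inr ⟨fun hh => h1 ((OddSum_zconj u).mp hh),
        fun hh => h2 ((Sdvd_zconj u).mp hh), e⟩
  · rw [hx, map_mul, conj_rt2_zpow, phi_conj]

lemma OddSum_add_even {u s : Z4} (hs : ¬ OddSum s) : (OddSum (u + s) ↔ OddSum u) := by
  simp only [OddSum, Int.odd_iff, Prod.fst_add, Prod.snd_add] at hs ⊢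
  omega

lemma Sdvd_add_sdvd' {u s : Z4} (hs : Sdvd s) : (Sdvd (u + s) ↔ Sdvd u) := by
  obtain ⟨⟨a, ha⟩, ⟨b, hb⟩⟩ := hs
  rw [Sdvd, Sdvd]
  simp only [Prod.fst_add, Prod.snd_add]
  constructor <;> rintro ⟨h1, h2⟩ <;> constructor <;> omega


lemma IsVal_add_lt {x y : ℂ} {m m' : ℤ} (h : IsVal x m) (h' : IsVal y m') (hlt : m < m') :
    IsVal (x + y) m := by
  obtain ⟨u, j, δ, hB, hx, hm⟩ := h
  obtain ⟨v, j', δ', hB', hy, hm'⟩ := h'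
  have hd := Base_delta_range hB
  have hd' := Base_delta_range hB'
  have hjle : j ≤ j' := by omega
  set e : ℕ := (j' - j).toNat with he
  have hcast : (rt2:ℂ) ^ (e:ℕ) = rt2 ^ (j' - j : ℤ) := by
    rw [← zpow_natCast, he, Int.toNat_of_nonneg (by omega : (0:ℤ) ≤ j' - j)]
  have hye : y = phi (zpowc e v) * rt2 ^ j := by
    rw [hy]
    calc phi v * rt2 ^ j' = phi v * (rt2 ^ (j' - j : ℤ) * rt2 ^ j) := by
          rw [← zpow_add₀ rt2_ne, sub_add_cancel]
    _ = (rt2 ^ (e:ℕ) * phi v) * rt2 ^ j := by rw [hcast]; ring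
    _ = phi (zpowc e v) * rt2 ^ j := by rw [phi_zpowc]
  have hxy : x + y = phi (u + zpowc e v) * rt2 ^ j := by
    rw [hx, hye, phi_add]; ring
  rcases Nat.eq_zero_or_pos e with he0 | hepos
  · -- j = j', so δ < δ', δ = 0, δ' = 1
    have hjj : j = j' := by omega
    have : δ = 0 ∧ δ' = 1 := by omega
    obtain ⟨e0, e1⟩ := this
    have hu_odd : OddSum u := by
      rcases hB with ⟨h1, _⟩ | ⟨_, _, hcon⟩
      · exact h1
      · omega
    have hv_even : ¬ OddSum v := by
      rcases hB' with ⟨_, hcon⟩ | ⟨h1, _, _⟩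
      · omega
      · exact h1
    have hzp : zpowc e v = v := by rw [he0]; rfl
    refine ⟨u + zpowc e v, j, 0, Or.inl ⟨?_, rfl⟩, hxy, by omega⟩
    rw [hzp, OddSum_add_even hv_even]
    exact hu_odd
  · -- e ≥ 1: zpowc e v is sdvd and even
    obtain ⟨e', he'⟩ : ∃ e', e = e' + 1 := ⟨e - 1, by omega⟩
    have hrep : zpowc e v = zmul rt2c (zpowc e' v) := by
      rw [he', zpowc, zpowc, Function.iterate_succ_apply']
    have hsd : Sdvd (zpowc e v) := by rw [hrep]; exact Sdvd_zmul_rt2c _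
    have hev : ¬ OddSum (zpowc e v) := by rw [hrep]; exact notodd_zmul_rt2c _
    refine ⟨u + zpowc e v, j, δ, ?_, hxy, hm⟩
    rcases hB with ⟨h1, e0⟩ | ⟨h1, h2, e1⟩
    · exact Or.inl ⟨(OddSum_add_even hev).mpr h1, e0⟩
    · exact Or.inr ⟨fun hh => h1 ((OddSum_add_even hev).mp hh),
        fun hh => h2 ((Sdvd_add_sdvd' hsd).mp hh), e1⟩
lemma Zomega_iff (x : ℂ) : Zomega x ↔ ∃ u : Z4, x = phi u := by
  constructor
  · rintro ⟨a, b, c, d, h⟩; exact ⟨(a,b,c,d), h⟩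
  · rintro ⟨⟨a, b, c, d⟩, h⟩; exact ⟨a, b, c, d, h⟩

lemma Zomega_phi (u : Z4) : Zomega (phi u) := (Zomega_iff _).mpr ⟨u, rfl⟩

-- R2
lemma val_bound {x : ℂ} {m K : ℤ} (h : IsVal x m) (hz : Zomega (x * rt2 ^ K)) :
    -2*K ≤ m := by
  obtain ⟨u, j, δ, hB, hx, hm⟩ := h
  have hd := Base_delta_range hB
  obtain ⟨q, hq⟩ := (Zomega_iff _).mp hz
  by_contra hcon
  push_neg at hcon
  have hjK : j + K < 0 := by omega
  have : phi u = phi q * rt2 ^ ((-(j + K)).toNat) := by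
    have h1 : phi q = phi u * rt2 ^ (j + K) := by
      rw [← hq, hx, mul_assoc, ← zpow_add₀ rt2_ne]
    have h2 : phi u = phi q * rt2 ^ (-(j+K) : ℤ) := by
      rw [h1, mul_assoc, ← zpow_add₀ rt2_ne,
        show j + K + -(j+K) = 0 by ring, zpow_zero, mul_one]
    rwa [show (-(j+K) : ℤ) = (((-(j+K)).toNat : ℕ) : ℤ) from
      (Int.toNat_of_nonneg (by omega)).symm, zpow_natCast] at h2
  obtain ⟨h0, _⟩ := base_denom hB _ this
  omega

-- R3
lemma val_mem {x : ℂ} {m K : ℤ} (h : IsVal x m) (hK : -m ≤ 2*K) :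
    Zomega (x * rt2 ^ K) := by
  obtain ⟨u, j, δ, hB, hx, hm⟩ := h
  have hd := Base_delta_range hB
  have hjK : 0 ≤ j + K := by omega
  have : x * rt2 ^ K = phi (zpowc (j+K).toNat u) := by
    rw [phi_zpowc, hx, mul_assoc, ← zpow_add₀ rt2_ne, ← zpow_natCast rt2 (j+K).toNat,
      Int.toNat_of_nonneg hjK]
    ring
  rw [this]
  exact Zomega_phi _

lemma sde_of_val {x : ℂ} {m k : ℤ} (h : IsVal x m) (hs : IsSde x k) :
    m = -2*k ∨ m = -2*k + 1 := by
  obtain ⟨u, j, δ, hB, hx, hm⟩ := h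
  have hd := Base_delta_range hB
  have hmem : Zomega (x * rt2 ^ (-j : ℤ)) := by
    have : x * rt2 ^ (-j : ℤ) = phi u := by
      rw [hx, mul_assoc, ← zpow_add₀ rt2_ne, show j + -j = 0 by ring, zpow_zero, mul_one]
    rw [this]; exact Zomega_phi _
  have h1 : k ≤ -j := hs.2 _ hmem
  have h2 : -2*k ≤ m := val_bound ⟨u, j, δ, hB, hx, hm⟩ hs.1
  omega

lemma IsSde_ne_zero {x : ℂ} {k : ℤ} (h : IsSde x k) : x ≠ 0 := by
  intro h0
  subst h0
  have := h.2 (k - 1) (by simpa using ⟨0, 0, 0, 0, by norm_num⟩)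
  omega

lemma val_even_real {x : ℂ} {m : ℤ} (h : IsVal x m) (hr : (starRingEnd ℂ) x = x) :
    m = 2 * (m / 2) := by
  obtain ⟨u, j, δ, hB, hx, hm⟩ := h
  have hcon : phi (zconj u) = phi u := by
    have h1 : (starRingEnd ℂ) x = phi (zconj u) * rt2 ^ j := by
      rw [hx, map_mul, conj_rt2_zpow, phi_conj]
    rw [hr, hx] at h1
    field_simp [rt2_zpow_ne j] at h1
    exact h1.symm
  have huu : zconj u = u := phi_inj hcon
  have hc0 : u.2.2.1 = 0 ∧ u.2.2.2 = -u.2.1 := by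
    rw [zconj, Prod.ext_iff, Prod.ext_iff, Prod.ext_iff] at huu
    simp at huu
    omega
  have hδ : δ = 0 := by
    rcases hB with ⟨_, e⟩ | ⟨h1, h2, _⟩
    · exact e
    · exfalso
      apply h2
      have hsum : ¬ Odd (u.1 + u.2.1 + u.2.2.1 + u.2.2.2) := h1
      rw [Int.odd_iff] at hsum
      constructor
      · simp [hc0.1]; omega
      · rw [hc0.2]; omega
  omega
def Pnorm (u : Z4) : ℤ := u.1^2 + u.2.1^2 + u.2.2.1^2 + u.2.2.2^2

lemma Pnorm_pos {u : Z4} (h : u ≠ 0) : 0 < Pnorm u := by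
  rw [Pnorm]
  rcases eq_or_ne u.1 0 with h1 | h1
  · rcases eq_or_ne u.2.1 0 with h2 | h2
    · rcases eq_or_ne u.2.2.1 0 with h3 | h3
      · rcases eq_or_ne u.2.2.2 0 with h4 | h4
        · exfalso; apply h; ext <;> simp [h1, h2, h3, h4]
        · positivity
      · positivity
    · positivity
  · positivity

lemma Pnorm_half {w v : Z4} (h : w = zmul rt2c v) : Pnorm w = 2 * Pnorm v := by
  subst h
  rw [zmul_rt2c, Pnorm, Pnorm]
  simp
  ring

lemma exists_val_phi : ∀ N : ℕ, ∀ u : Z4, Pnorm u ≤ N → u ≠ 0 → ∃ m, IsVal (phi u) m := by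
  intro N
  induction N using Nat.strong_induction_on with
  | _ N ih =>
    intro u hle hne
    by_cases ho : OddSum u
    · exact ⟨0, IsVal_phi ho⟩
    · by_cases hs : Sdvd u
      · obtain ⟨v, hv, _⟩ := Sdvd_elim hs
        have hvne : v ≠ 0 := by
          intro h0
          apply hne
          apply phi_inj
          rw [hv, h0, phi_zmul_rt2c, phi_zero]
          simp
        have hP : Pnorm u = 2 * Pnorm v := Pnorm_half hv
        have hPv := Pnorm_pos hvne
        have hPu := Pnorm_pos hne
        have hNpos : 1 ≤ N := by omega
        obtain ⟨m, hm⟩ := ih (N - 1) (by omega) v (by omega) hvne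
        refine ⟨m + 2, ?_⟩
        have : phi u = phi v * rt2 ^ (1:ℤ) := by
          rw [hv, phi_zmul_rt2c, zpow_one]; ring
        rw [this]
        have := IsVal_mul_rt2z 1 hm
        simpa using this
      · exact ⟨1, ⟨u, 0, 1, Or.inr ⟨ho, hs, rfl⟩, by simp, by ring⟩⟩

lemma exists_val {x : ℂ} (h : ZRoot2i x) (hne : x ≠ 0) : ∃ m, IsVal x m := by
  obtain ⟨y, hy, N, hx⟩ := h
  obtain ⟨u, hu⟩ := (Zomega_iff y).mp hy
  have hune : u ≠ 0 := by
    intro h0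
    apply hne
    rw [hx, hu, h0, phi_zero]
    simp
  obtain ⟨m, hm⟩ := exists_val_phi (Pnorm u).toNat u (by omega) hune
  refine ⟨m + 2 * (-(N:ℤ)), ?_⟩
  have h2 := IsVal_mul_rt2z (-(N:ℤ)) hm
  have : x = phi u * rt2 ^ (-(N:ℤ)) := by
    rw [hx, hu, zpow_neg, zpow_natCast]
    field_simp
  rw [this]
  exact h2

lemma val_to_zroot {x : ℂ} {m : ℤ} (h : IsVal x m) : ZRoot2i x := by
  obtain ⟨u, j, δ, hB, hx, hm⟩ := h
  rcases le_or_gt 0 j with hj | hj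
  · refine ⟨phi (zpowc j.toNat u), Zomega_phi _, 0, ?_⟩
    rw [phi_zpowc, hx]
    rw [← zpow_natCast rt2 j.toNat, Int.toNat_of_nonneg hj]
    simp [mul_comm]
  · refine ⟨phi u, Zomega_phi _, (-j).toNat, ?_⟩
    rw [hx]
    rw [← zpow_natCast rt2 (-j).toNat, Int.toNat_of_nonneg (by omega)]
    rw [eq_div_iff (rt2_zpow_ne _), mul_assoc, ← zpow_add₀ rt2_ne,
      show j + -j = 0 by ring, zpow_zero, mul_one]

lemma trace_div {b : ℂ} {K : ℤ} (h : Zomega (b * rt2 ^ K)) :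
    Zomega ((b + (starRingEnd ℂ) b) * rt2 ^ (K - 1)) := by
  obtain ⟨q, hq⟩ := (Zomega_iff _).mp h
  have hconj : (starRingEnd ℂ) b * rt2 ^ K = phi (zconj q) := by
    rw [← phi_conj, ← hq, map_mul, conj_rt2_zpow]
  have hsum : (b + (starRingEnd ℂ) b) * rt2 ^ K = phi (q + zconj q) := by
    rw [phi_add, ← hq, ← hconj]; ring
  have hsd : Sdvd (q + zconj q) := by
    rw [Sdvd, zconj]
    simp
    constructor <;> omega
  obtain ⟨w, hw, _⟩ := Sdvd_elim hsd
  refine (Zomega_iff _).mpr ⟨w, ?_⟩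
  have h1 : (b + (starRingEnd ℂ) b) * rt2 ^ K = rt2 * phi w := by
    rw [hsum, hw, phi_zmul_rt2c]
  have h2 : (b + (starRingEnd ℂ) b) * rt2 ^ (K - 1) * rt2 = phi w * rt2 := by
    rw [mul_assoc, ← zpow_add_one₀ rt2_ne, sub_add_cancel, h1]
    ring
  exact mul_right_cancel₀ rt2_ne h2

lemma IsVal_omg_zpow (k : ℤ) : IsVal (omg ^ k) 0 := by
  have h8 : omg ^ (8:ℤ) = 1 := by
    rw [show (8:ℤ) = ((8:ℕ):ℤ) from rfl, zpow_natCast, omg_pow8]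
  have h0 : (0:ℤ) ≤ k % 8 := Int.emod_nonneg k (by norm_num)
  have hsplit : omg ^ k = omg ^ ((k % 8).toNat : ℕ) := by
    have e1 : omg ^ k = omg ^ (8 * (k / 8)) * omg ^ (k % 8) := by
      rw [← zpow_add₀ omg_ne]
      congr 1
      exact (Int.mul_ediv_add_emod k 8).symm
    have e2 : omg ^ (8 * (k / 8) : ℤ) = 1 := by
      rw [zpow_mul, h8, one_zpow]
    have e3 : omg ^ (k % 8) = omg ^ ((k % 8).toNat : ℕ) := by
      rw [← zpow_natCast omg, Int.toNat_of_nonneg h0]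
    rw [e1, e2, e3, one_mul]
  rw [hsplit]
  have hlt : (k % 8).toNat < 8 := by
    have := Int.emod_lt_of_pos k (by norm_num : (0:ℤ) < 8)
    omega
  set r := (k % 8).toNat with hr
  clear_value r
  interval_cases r
  · have h := IsVal_phi (u := (1,0,0,0)) (by rw [OddSum]; norm_num)
    rwa [phi_one] at h
  · have h := IsVal_phi (u := (0,1,0,0)) (by rw [OddSum]; norm_num)
    rw [show phi (0,1,0,0) = omg ^ 1 by simp [phi]] at h
    exact h
  · have h := IsVal_phi (u := (0,0,1,0)) (by rw [OddSum]; norm_num)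
    rw [show phi (0,0,1,0) = omg ^ 2 by simp [phi]] at h
    exact h
  · have h := IsVal_phi (u := (0,0,0,1)) (by rw [OddSum]; norm_num)
    rw [show phi (0,0,0,1) = omg ^ 3 by simp [phi]] at h
    exact h
  · have h := IsVal_phi (u := (-1,0,0,0)) (by rw [OddSum]; norm_num)
    rw [show phi (-1,0,0,0) = omg ^ 4 by
      simp [phi]; linear_combination -omg_pow4] at h
    exact h
  · have h := IsVal_phi (u := (0,-1,0,0)) (by rw [OddSum]; norm_num)
    rw [show phi (0,-1,0,0) = omg ^ 5 by
      simp [phi]; linear_combination -omg * omg_pow4] at h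
    exact h
  · have h := IsVal_phi (u := (0,0,-1,0)) (by rw [OddSum]; norm_num)
    rw [show phi (0,0,-1,0) = omg ^ 6 by
      simp [phi]; linear_combination -omg^2 * omg_pow4] at h
    exact h
  · have h := IsVal_phi (u := (0,0,0,-1)) (by rw [OddSum]; norm_num)
    rw [show phi (0,0,0,-1) = omg ^ 7 by
      simp [phi]; linear_combination -omg^3 * omg_pow4] at h
    exact h
lemma Zroot_iff (x : ℂ) : ZRoot2i x ↔ ∃ (u : Z4) (N : ℕ), x = phi u / rt2 ^ N := by
  constructor
  · rintro ⟨y, hy, N, hx⟩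
    obtain ⟨u, hu⟩ := (Zomega_iff y).mp hy
    exact ⟨u, N, by rw [hx, hu]⟩
  · rintro ⟨u, N, hx⟩
    exact ⟨phi u, Zomega_phi u, N, hx⟩

lemma rt2_pow_ne (N : ℕ) : (rt2:ℂ) ^ N ≠ 0 := pow_ne_zero N rt2_ne

lemma Zroot_mul {x y : ℂ} (hx : ZRoot2i x) (hy : ZRoot2i y) : ZRoot2i (x * y) := by
  obtain ⟨u, N, hxe⟩ := (Zroot_iff x).mp hx
  obtain ⟨v, M, hye⟩ := (Zroot_iff y).mp hy
  refine (Zroot_iff _).mpr ⟨zmul u v, N + M, ?_⟩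
  rw [hxe, hye, phi_mul, pow_add]
  field_simp

lemma Zroot_add {x y : ℂ} (hx : ZRoot2i x) (hy : ZRoot2i y) : ZRoot2i (x + y) := by
  obtain ⟨u, N, hxe⟩ := (Zroot_iff x).mp hx
  obtain ⟨v, M, hye⟩ := (Zroot_iff y).mp hy
  refine (Zroot_iff _).mpr ⟨zpowc M u + zpowc N v, N + M, ?_⟩
  rw [hxe, hye, phi_add, phi_zpowc, phi_zpowc, pow_add,
    div_add_div _ _ (rt2_pow_ne N) (rt2_pow_ne M)]
  congr 1
  ring

lemma Zroot_neg {x : ℂ} (hx : ZRoot2i x) : ZRoot2i (-x) := by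
  obtain ⟨u, N, hxe⟩ := (Zroot_iff x).mp hx
  refine (Zroot_iff _).mpr ⟨-u, N, ?_⟩
  rw [hxe, phi_neg]
  ring

lemma Zroot_conj {x : ℂ} (hx : ZRoot2i x) : ZRoot2i ((starRingEnd ℂ) x) := by
  obtain ⟨u, N, hxe⟩ := (Zroot_iff x).mp hx
  refine (Zroot_iff _).mpr ⟨zconj u, N, ?_⟩
  rw [hxe, map_div₀, phi_conj, map_pow, conj_rt2]

lemma Zroot_div_rt2 {x : ℂ} (hx : ZRoot2i x) : ZRoot2i (x / rt2) := by
  obtain ⟨u, N, hxe⟩ := (Zroot_iff x).mp hx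
  refine (Zroot_iff _).mpr ⟨u, N + 1, ?_⟩
  rw [hxe, pow_add, pow_one]
  rw [div_div]
lemma main_aux (z w g z' w' p p' : ℂ) (n n' : ℤ)
    (hz : ZRoot2i z) (hw : ZRoot2i w) (hvg : IsVal g 0)
    (hgconj : g * (starRingEnd ℂ) g = 1)
    (hunit : z * (starRingEnd ℂ) z + w * (starRingEnd ℂ) w = 1)
    (hz'def : z' = (z + w * g) / rt2) (hw'def : w' = (z - w * g) / rt2)
    (hpdef : p = z * (starRingEnd ℂ) z) (hp'def : p' = z' * (starRingEnd ℂ) z')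
    (hn : IsSde p n) (h4 : 4 ≤ n) (hn' : IsSde p' n') : |n' - n| ≤ 1 := by
  have h2 : rt2 * rt2 = 2 := by linear_combination rt2_sq
  -- basic nonvanishing and values for z, w, p
  have hpne : p ≠ 0 := IsSde_ne_zero hn
  have hzne : z ≠ 0 := by
    intro h0
    apply hpne
    rw [hpdef, h0]
    simp
  obtain ⟨mp, hvp⟩ := exists_val (x := p)
    (by rw [hpdef]; exact Zroot_mul hz (Zroot_conj hz)) hpne
  have hpreal : (starRingEnd ℂ) p = p := by
    rw [hpdef, map_mul, Complex.conj_conj]; ring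
  have hmp : mp = -2*n := by
    rcases sde_of_val hvp hn with h | h
    · omega
    · have := val_even_real hvp hpreal; omega
  obtain ⟨mz, hvz⟩ := exists_val hz hzne
  have hmz : mz = -n := by
    have hmul := IsVal_mul hvz (IsVal_conj hvz)
    rw [← hpdef] at hmul
    have := val_unique hmul hvp
    omega
  have hwne : w ≠ 0 := by
    intro h0
    rw [h0] at hunit
    have hp1 : p = 1 := by rw [hpdef, ← hunit]; simp
    have h0' := hvp
    rw [hp1] at h0'
    have := val_unique h0' IsVal_one
    omega
  obtain ⟨mw, hvw⟩ := exists_val hw hwne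
  have hq : w * (starRingEnd ℂ) w = 1 + (-p) := by rw [hpdef]; linear_combination hunit
  have hvnegp : IsVal (-p) (-2*n) := by rw [← hmp]; exact IsVal_neg hvp
  have hone' : IsVal (1 + -p) (-2*n) := by
    rw [add_comm]
    exact IsVal_add_lt hvnegp IsVal_one (by omega)
  have hmw : mw = -n := by
    have hmul := IsVal_mul hvw (IsVal_conj hvw)
    rw [hq] at hmul
    have := val_unique hmul hone'
    omega
  -- conjugates of z', w'
  have hcz' : (starRingEnd ℂ) z' =
      ((starRingEnd ℂ) z + (starRingEnd ℂ) w * (starRingEnd ℂ) g) / rt2 := by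
    rw [hz'def, map_div₀, conj_rt2, map_add, map_mul]
  have hcw' : (starRingEnd ℂ) w' =
      ((starRingEnd ℂ) z - (starRingEnd ℂ) w * (starRingEnd ℂ) g) / rt2 := by
    rw [hw'def, map_div₀, conj_rt2, map_sub, map_mul]
  -- p' facts
  have hp'ne : p' ≠ 0 := IsSde_ne_zero hn'
  have hz'ne : z' ≠ 0 := by
    intro h0
    apply hp'ne
    rw [hp'def, h0]
    simp
  have hz'root : ZRoot2i z' := by
    rw [hz'def]
    exact Zroot_div_rt2 (Zroot_add hz (Zroot_mul hw (val_to_zroot hvg)))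
  have hw'root : ZRoot2i w' := by
    have he : w' = (z + -(w * g)) / rt2 := by rw [hw'def]; ring_nf
    rw [he]
    exact Zroot_div_rt2 (Zroot_add hz (Zroot_neg (Zroot_mul hw (val_to_zroot hvg))))
  obtain ⟨mp', hvp'⟩ := exists_val (x := p')
    (by rw [hp'def]; exact Zroot_mul hz'root (Zroot_conj hz'root)) hp'ne
  have hp'real : (starRingEnd ℂ) p' = p' := by
    rw [hp'def, map_mul, Complex.conj_conj]; ring
  have hmp' : mp' = -2*n' := by
    rcases sde_of_val hvp' hn' with h | h
    · omega
    · have := val_even_real hvp' hp'real; omega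
  obtain ⟨mz', hvz'⟩ := exists_val hz'root hz'ne
  have hmz' : mz' = -n' := by
    have hmul := IsVal_mul hvz' (IsVal_conj hvz')
    rw [← hp'def] at hmul
    have := val_unique hmul hvp'
    omega
  -- identities
  have hunit' : p' + w' * (starRingEnd ℂ) w' = 1 := by
    rw [hp'def, hcz', hcw', hz'def, hw'def, div_mul_div_comm, div_mul_div_comm, h2]
    linear_combination hunit + w*((starRingEnd ℂ) w)*hgconj
  have ht'eq : z' * (starRingEnd ℂ) w' + (starRingEnd ℂ) z' * w' = p * 2 + (-1) := by
    rw [hcz', hcw', hz'def, hw'def, hpdef, div_mul_div_comm, div_mul_div_comm, h2]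
    linear_combination -hunit - w*((starRingEnd ℂ) w)*hgconj
  have hteq : (starRingEnd ℂ) z * w * g + z * (starRingEnd ℂ) w * (starRingEnd ℂ) g
      = p' * 2 + (-1) := by
    rw [hp'def, hcz', hz'def, div_mul_div_comm, h2]
    linear_combination -hunit - w*((starRingEnd ℂ) w)*hgconj
  -- value of t'
  have hvt' : IsVal (z' * (starRingEnd ℂ) w' + (starRingEnd ℂ) z' * w') (-2*n + 4) := by
    rw [ht'eq]
    have hp2 : IsVal (p * 2) (-2*n + 4) := by
      have h := IsVal_mul hvp IsVal_two
      rw [hmp] at h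
      exact h
    exact IsVal_add_lt hp2 (IsVal_neg IsVal_one) (by omega)
  have hw'ne : w' ≠ 0 := by
    intro h0
    apply IsVal_ne_zero hvt'
    rw [h0]
    simp
  obtain ⟨mw', hvw'⟩ := exists_val hw'root hw'ne
  have hconjb : (starRingEnd ℂ) (z' * (starRingEnd ℂ) w') = (starRingEnd ℂ) z' * w' := by
    rw [map_mul, Complex.conj_conj]
  -- n' ≥ 1
  have hn'pos : 1 ≤ n' := by
    by_contra hcon
    push_neg at hcon
    have hmq' : 0 ≤ mw' + mw' := by
      by_contra hq0
      push_neg at hq0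
      have hq'val : IsVal (w' * (starRingEnd ℂ) w') (mw' + mw') :=
        IsVal_mul hvw' (IsVal_conj hvw')
      have hadd : IsVal (w' * (starRingEnd ℂ) w' + p') (mw' + mw') :=
        IsVal_add_lt hq'val hvp' (by omega)
      have h1 : w' * (starRingEnd ℂ) w' + p' = 1 := by rw [← hunit']; ring
      rw [h1] at hadd
      have := val_unique hadd IsVal_one
      omega
    have hβ : IsVal (z' * (starRingEnd ℂ) w') (mz' + mw') := IsVal_mul hvz' (IsVal_conj hvw')
    have hZ : Zomega ((z' * (starRingEnd ℂ) w') * rt2 ^ (0:ℤ)) := val_mem hβ (by omega)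
    have hT := trace_div hZ
    rw [hconjb] at hT
    have := val_bound hvt' hT
    omega
  -- mw' = -n'
  have hq'1 : w' * (starRingEnd ℂ) w' = 1 + (-p') := by linear_combination hunit'
  have hvnegp' : IsVal (-p') (-2*n') := by rw [← hmp']; exact IsVal_neg hvp'
  have h1p' : IsVal (1 + -p') (-2*n') := by
    rw [add_comm]
    exact IsVal_add_lt hvnegp' IsVal_one (by omega)
  have hmw' : mw' = -n' := by
    have hmul := IsVal_mul hvw' (IsVal_conj hvw')
    rw [hq'1] at hmul
    have := val_unique hmul h1p'
    omega
  -- reverse bound : n - 1 ≤ n'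
  have hrev : n - 1 ≤ n' := by
    have hβ : IsVal (z' * (starRingEnd ℂ) w') (mz' + mw') := IsVal_mul hvz' (IsVal_conj hvw')
    have hZ : Zomega ((z' * (starRingEnd ℂ) w') * rt2 ^ (n':ℤ)) := val_mem hβ (by omega)
    have hT := trace_div hZ
    rw [hconjb] at hT
    have := val_bound hvt' hT
    omega
  -- forward bound : n' ≤ n + 1
  have hfor : n' ≤ n + 1 := by
    have hβ : IsVal ((starRingEnd ℂ) z * w * g) (mz + mw + 0) :=
      IsVal_mul (IsVal_mul (IsVal_conj hvz) hvw) hvg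
    have hZ : Zomega (((starRingEnd ℂ) z * w * g) * rt2 ^ (n:ℤ)) := val_mem hβ (by omega)
    have hT := trace_div hZ
    have hcb : (starRingEnd ℂ) ((starRingEnd ℂ) z * w * g)
        = z * (starRingEnd ℂ) w * (starRingEnd ℂ) g := by
      rw [map_mul, map_mul, Complex.conj_conj]
    rw [hcb, hteq] at hT
    have hvt : IsVal (p' * 2 + (-1)) (-2*n' + 4) := by
      have hp2 : IsVal (p' * 2) (-2*n' + 4) := by
        have h := IsVal_mul hvp' IsVal_two
        rw [hmp'] at h
        exact h
      exact IsVal_add_lt hp2 (IsVal_neg IsVal_one) (by omega)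
    have := val_bound hvt hT
    omega
  rw [abs_le]
  constructor <;> omega

/-- For a unit vector (z, w) over Z[1/√2, i] with sde(|z|², √2) ≥ 4, applying
H·T^k changes sde(|·|²) by at most 1. -/
theorem stmt11 (z w : ℂ) (hz : ZRoot2i z) (hw : ZRoot2i w)
    (hunit : z * (starRingEnd ℂ) z + w * (starRingEnd ℂ) w = 1)
    (n : ℤ) (hn : IsSde (z * (starRingEnd ℂ) z) n) (h4 : 4 ≤ n)
    (k : ℤ) (n' : ℤ)
    (hn' : IsSde (((z + w * omg ^ k) / rt2) * (starRingEnd ℂ) ((z + w * omg ^ k) / rt2)) n') :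
    |n' - n| ≤ 1 := by
  have hgconj : (omg ^ k) * (starRingEnd ℂ) (omg ^ k) = 1 := by
    have homg_inv : omg * (-omg^3) = 1 := by linear_combination -omg_pow4
    rw [map_zpow₀, conj_omg, ← mul_zpow, homg_inv, one_zpow]
  exact main_aux z w (omg ^ k) _ _ _ _ n n' hz hw (IsVal_omg_zpow k) hgconj hunit
    rfl rfl rfl rfl hn h4 hn'

end
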